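/- In a clan, given a map of spans where the left square is Reedy fibrant, i.e. a diagram a ↠ b ← c over a' ↠ b' ← c' with vertical fibrations a ↠ a', c ↠ c' and the induced map a → a' ×_{b'} b a fibration, the induced map on pullbacks a ×_b c → a' ×_{b'} c' is a fibration. -/
import Mathlib


open CategoryTheory Limits

universe v u

/-- A clan structure on a category `C`: a terminal object together with a class of
"fibrations" closed under isomorphism, composition and pullback, containing all maps to the
terminal object, and such that pullbacks of fibrations exist. -/
structure Clan (C : Type u) [Category.{v} C] where
  /-- the class of fibrations -/
  Fib : ∀ ⦃a b : C⦄, (a ⟶ b) → Prop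
  /-- the terminal object -/
  T : C
  isTerminalT : IsTerminal T
  fib_toT : ∀ ⦃a : C⦄ (f : a ⟶ T), Fib f
  fib_iso : ∀ ⦃a b a' b' : C⦄ (f : a ⟶ b) (f' : a' ⟶ b'),
    (Arrow.mk f ≅ Arrow.mk f') → Fib f → Fib f'
  fib_comp : ∀ ⦃a b c : C⦄ (f : a ⟶ b) (g : b ⟶ c), Fib f → Fib g → Fib (f ≫ g)
  fib_pb_exists : ∀ ⦃a b c : C⦄ (g : a ⟶ b) (f : c ⟶ b), Fib f →
    ∃ (d : C) (p : d ⟶ a) (q : d ⟶ c), IsPullback p q g f ∧ Fib p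
  fib_pb_stable : ∀ ⦃d a b c : C⦄ (p : d ⟶ a) (q : d ⟶ c) (g : a ⟶ b) (f : c ⟶ b),
    IsPullback p q g f → Fib f → Fib p

/-- In a clan, given a map of spans `(a ↠ b ← c) → (a' ↠ b' ← c')` with
vertical fibrations `a ↠ a'`, `c ↠ c'` whose left square is Reedy fibrant (the gap map
`a → a' ×_{b'} b` is a fibration), the induced map on pullbacks `a ×_b c → a' ×_{b'} c'` is a
fibration. -/
theorem reedy_fibrant_map_of_spans_induces_fibration_on_pullbacks
    {C : Type u} [Category.{v} C] (S : Clan C)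
    {a b c a' b' c' : C}
    (f : a ⟶ b) (g : c ⟶ b) (f' : a' ⟶ b') (g' : c' ⟶ b')
    (va : a ⟶ a') (vb : b ⟶ b') (vc : c ⟶ c')
    (hf : S.Fib f) (hf' : S.Fib f') (hva : S.Fib va) (hvc : S.Fib vc)
    (sq1 : va ≫ f' = f ≫ vb) (sq2 : vc ≫ g' = g ≫ vb)
    -- the pullback `a ×_b c`
    {P : C} (p : P ⟶ a) (q : P ⟶ c) (hP : IsPullback p q f g)
    -- the pullback `a' ×_{b'} c'`
    {P' : C} (p' : P' ⟶ a') (q' : P' ⟶ c') (hP' : IsPullback p' q' f' g')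
    -- the pullback `a' ×_{b'} b` and the Reedy gap map
    {E : C} (e₁ : E ⟶ a') (e₂ : E ⟶ b) (hE : IsPullback e₁ e₂ f' vb)
    (gap : a ⟶ E) (hgap₁ : gap ≫ e₁ = va) (hgap₂ : gap ≫ e₂ = f)
    (hReedy : S.Fib gap)
    -- the induced map on pullbacks
    (h : P ⟶ P') (hh₁ : h ≫ p' = p ≫ va) (hh₂ : h ≫ q' = q ≫ vc) :
    S.Fib h := by
  -- `e₂` is a fibration, being a pullback of `f'`
  have he₂ : S.Fib e₂ := S.fib_pb_stable e₂ e₁ vb f' hE.flip hf'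
  -- form the pullback `Q = c ×_b E`
  obtain ⟨Q, rc, rE, hQ, -⟩ := S.fib_pb_exists g e₂ he₂
  -- the map `k : P ⟶ Q` induced by `q` and `p ≫ gap`
  have wk : q ≫ g = (p ≫ gap) ≫ e₂ := by
    rw [Category.assoc, hgap₂, ← hP.w]
  set k : P ⟶ Q := hQ.lift q (p ≫ gap) wk with hk
  have hk₁ : k ≫ rc = q := hQ.lift_fst _ _ _
  have hk₂ : k ≫ rE = p ≫ gap := hQ.lift_snd _ _ _
  -- the top square `P → a, P → Q, gap, rE` is a pullback, by cancellation
  have htop : IsPullback p k gap rE := by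
    refine IsPullback.of_bot ?_ hk₂.symm hQ.flip
    have : p ≫ (gap ≫ e₂) = (k ≫ rc) ≫ g := by rw [hgap₂, hk₁, hP.w]
    simpa [hgap₂, hk₁] using hP
  have hFibk : S.Fib k := S.fib_pb_stable k p rE gap htop.flip hReedy
  -- the map `m : Q ⟶ P'`
  have wm : (rE ≫ e₁) ≫ f' = (rc ≫ vc) ≫ g' := by
    rw [Category.assoc, hE.w, ← Category.assoc, ← hQ.w, Category.assoc,
      Category.assoc, sq2]
  set m : Q ⟶ P' := hP'.lift (rE ≫ e₁) (rc ≫ vc) wm with hm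
  have hm₁ : m ≫ p' = rE ≫ e₁ := hP'.lift_fst _ _ _
  have hm₂ : m ≫ q' = rc ≫ vc := hP'.lift_snd _ _ _
  -- the big square `Q → a', Q → c, f', vc ≫ g'` is a pullback (pasting)
  have hbig : IsPullback (rE ≫ e₁) rc f' (g ≫ vb) := hQ.flip.paste_horiz hE
  have hbig' : IsPullback (m ≫ p') rc f' (vc ≫ g') := by
    rw [hm₁, sq2]; exact hbig
  -- hence `Q = c ×_{c'} P'` by cancellation
  have hmsq : IsPullback m rc q' vc := IsPullback.of_right hbig' hm₂ hP'
  have hFibm : S.Fib m := S.fib_pb_stable m rc q' vc hmsq hvc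
  -- `h = k ≫ m`
  have hkm : h = k ≫ m := by
    apply hP'.hom_ext
    · rw [hh₁, Category.assoc, hm₁, ← Category.assoc, hk₂, Category.assoc, hgap₁]
    · rw [hh₂, Category.assoc, hm₂, ← Category.assoc, hk₁]
  rw [hkm]
  exact S.fib_comp k m hFibk hFibm
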